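/- In the Poincaré ball, given an ideal point ṽ ∈ S^{d−1} and x ∈ B^d, the unique λ* ∈ (−1,1) such that B_ṽ(λ*ṽ) = B_ṽ(x) is λ* = (1 − ‖x‖₂² − ‖ṽ − x‖₂²) / (1 − ‖x‖₂² + ‖ṽ − x‖₂²), where B_ṽ(y) = log(‖ṽ − y‖₂² / (1 − ‖y‖₂²)). -/
import Mathlib


open MeasureTheory

noncomputable def arcosh (x : ℝ) : ℝ := Real.log (x + Real.sqrt (x^2 - 1))

/-- Squared Euclidean norm. -/
noncomputable def nsq (d : ℕ) (x : Fin d → ℝ) : ℝ := ∑ i, (x i)^2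

/-- The Poincaré ball. -/
def BallSet (d : ℕ) : Set (Fin d → ℝ) := {x | nsq d x < 1}

/-- Poincaré ball distance. -/
noncomputable def dB (d : ℕ) (x y : Fin d → ℝ) : ℝ :=
  arcosh (1 + 2 * nsq d (x - y) / ((1 - nsq d x) * (1 - nsq d y)))

lemma nsq_smul (d : ℕ) (c : ℝ) (v : Fin d → ℝ) : nsq d (c • v) = c^2 * nsq d v := by
  simp [nsq, Pi.smul_apply, smul_eq_mul, mul_pow, Finset.mul_sum]

lemma nsq_nonneg (d : ℕ) (v : Fin d → ℝ) : 0 ≤ nsq d v :=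
  Finset.sum_nonneg fun i _ => sq_nonneg _

/-- the unique `λ* ∈ (−1,1)` with `B_ṽ(λ*ṽ) = B_ṽ(x)` is
`(1 − ‖x‖² − ‖ṽ − x‖²)/(1 − ‖x‖² + ‖ṽ − x‖²)`, where
`B_ṽ(y) = log(‖ṽ − y‖²/(1 − ‖y‖²))`. -/
theorem horospherical_projection_poincare (d : ℕ) (vt : Fin d → ℝ)
    (hvt : nsq d vt = 1) (x : Fin d → ℝ) (hx : x ∈ BallSet d) :
    let B : (Fin d → ℝ) → ℝ := fun y => Real.log (nsq d (vt - y) / (1 - nsq d y))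
    let lam := (1 - nsq d x - nsq d (vt - x)) / (1 - nsq d x + nsq d (vt - x))
    (lam ∈ Set.Ioo (-1 : ℝ) 1 ∧ B (lam • vt) = B x) ∧
      ∀ l ∈ Set.Ioo (-1 : ℝ) 1, B (l • vt) = B x → l = lam := by
  intro B lam
  have ha : nsq d x < 1 := hx
  have hb0 : (0:ℝ) ≤ nsq d (vt - x) := nsq_nonneg d _
  have hb : 0 < nsq d (vt - x) := by
    rcases hb0.lt_or_eq with h | h
    · exact h
    · exfalso
      have hxe : vt = x := by
        funext i
        have h1 := (Finset.sum_eq_zero_iff_of_nonneg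
          (fun i _ => sq_nonneg ((vt - x) i))).1 h.symm i (Finset.mem_univ i)
        have h2 : (vt - x) i = 0 := by
          have := sq_nonneg ((vt - x) i); nlinarith
        have h3 : vt i - x i = 0 := h2
        linarith
      rw [hxe] at hvt
      linarith
  have hs : 0 < 1 - nsq d x + nsq d (vt - x) := by linarith
  have hlam : lam = (1 - nsq d x - nsq d (vt - x)) / (1 - nsq d x + nsq d (vt - x)) := rfl
  have hlt : lam < 1 := by
    rw [hlam, div_lt_one hs]; linarith
  have hgt : (-1 : ℝ) < lam := by
    rw [hlam, lt_div_iff₀ hs]; linarith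
  have hBl : ∀ l : ℝ, B (l • vt) = Real.log ((1-l)^2 / (1 - l^2)) := by
    intro l
    have hsub : vt - l • vt = (1 - l) • vt := by rw [sub_smul, one_smul]
    simp only [B, hsub, nsq_smul, hvt, mul_one]
  have hlamsq : lam^2 < 1 := by nlinarith
  have hls : lam * (1 - nsq d x + nsq d (vt - x)) = 1 - nsq d x - nsq d (vt - x) := by
    rw [hlam, div_mul_cancel₀ _ hs.ne']
  have hkey : (1-lam)^2 / (1 - lam^2) = nsq d (vt - x) / (1 - nsq d x) := by
    rw [div_eq_div_iff (by linarith : (1 - lam^2) ≠ 0) (by linarith : (1 - nsq d x) ≠ 0)]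
    linear_combination (lam - 1) * hls
  constructor
  · refine ⟨⟨hgt, hlt⟩, ?_⟩
    rw [hBl lam, hkey]
  · intro l hl hBeq
    rw [hBl l] at hBeq
    have h1l : 0 < 1 - l := by linarith [hl.2]
    have hl2 : 0 < 1 - l^2 := by nlinarith [hl.1, hl.2]
    have hu : 0 < (1-l)^2 / (1 - l^2) := div_pos (by positivity) hl2
    have hv : 0 < nsq d (vt - x) / (1 - nsq d x) := div_pos hb (by linarith)
    have huv : (1-l)^2 / (1 - l^2) = nsq d (vt - x) / (1 - nsq d x) := by
      have := congrArg Real.exp hBeq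
      rwa [Real.exp_log hu, Real.exp_log hv] at this
    have hE : (1-l)^2 * (1 - nsq d x) = nsq d (vt - x) * (1 - l^2) := by
      rwa [div_eq_div_iff hl2.ne' (by linarith : (1 - nsq d x) ≠ 0)] at huv
    have hT : (1 - l) * (l * (1 - nsq d x + nsq d (vt - x)) - (1 - nsq d x - nsq d (vt - x))) = 0 := by
      linear_combination -hE
    have hT2 : l * (1 - nsq d x + nsq d (vt - x)) - (1 - nsq d x - nsq d (vt - x)) = 0 := by
      rcases mul_eq_zero.1 hT with h | h
      · exfalso; linarith
      · exact h
    rw [hlam, eq_div_iff hs.ne']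
    linarith
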